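/- For any policy π₀ and α ∈ [0,1), the α-optimal value dominates the value of π₀: v^{π₀} ≤ v^{π^α(π_α*,π₀)} componentwise, with equality everywhere if and only if π₀ is an optimal policy of the MDP. -/

import Mathlib

open Finset

/-- One-step return for state `s`, action `a`, value `v`. -/
noncomputable def qOf {S A : Type*} [Fintype S] (γ : ℝ)
    (r : S → A → ℝ) (P : S → A → S → ℝ) (v : S → ℝ) (s : S) (a : A) : ℝ :=
  r s a + γ * ∑ s', P s a s' * v s'

/-- Fixed-policy Bellman operator. -/
noncomputable def Tpol {S A : Type*} [Fintype S] [Fintype A] (γ : ℝ)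
    (r : S → A → ℝ) (P : S → A → S → ℝ) (π : S → A → ℝ) (v : S → ℝ) : S → ℝ :=
  fun s => ∑ a, π s a * qOf γ r P v s a

/-- Optimal Bellman operator. -/
noncomputable def Topt {S A : Type*} [Fintype S] [Fintype A] (γ : ℝ)
    (r : S → A → ℝ) (P : S → A → S → ℝ) (v : S → ℝ) : S → ℝ :=
  fun s => ⨆ a : A, qOf γ r P v s a
/-- Mixture policy `π^c(π₁,π₂) = (1-c)π₁ + c π₂`. -/
noncomputable def mixPol {S A : Type*} (c : ℝ) (π1 π2 : S → A → ℝ) : S → A → ℝ :=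
  fun s a => (1 - c) * π1 s a + c * π2 s a
set_option linter.unusedSectionVars false


section Aux
variable {S A : Type*} [Fintype S] [Fintype A] [Nonempty A]

lemma qOf_bdd (γ : ℝ) (r : S → A → ℝ) (P : S → A → S → ℝ) (v : S → ℝ) (s : S) :
    BddAbove (Set.range fun a => qOf γ r P v s a) :=
  (Set.finite_range _).bddAbove

lemma qOf_sub (γ : ℝ) (r : S → A → ℝ) (P : S → A → S → ℝ) (v w : S → ℝ) (s : S) (a : A) :
    qOf γ r P v s a - qOf γ r P w s a = γ * ∑ s', P s a s' * (v s' - w s') := by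
  have h : ∑ s', P s a s' * (v s' - w s')
      = (∑ s', P s a s' * v s') - ∑ s', P s a s' * w s' := by
    rw [← Finset.sum_sub_distrib]
    exact Finset.sum_congr rfl fun _ _ => by ring
  simp only [qOf, h]; ring

lemma qOf_sub_le (γ : ℝ) (hγ0 : 0 ≤ γ) (r : S → A → ℝ) (P : S → A → S → ℝ)
    (hP : ∀ s a, (∀ s', 0 ≤ P s a s') ∧ ∑ s', P s a s' = 1)
    (v w : S → ℝ) (M : ℝ) (hM : ∀ s', v s' - w s' ≤ M) (s : S) (a : A) :
    qOf γ r P v s a ≤ qOf γ r P w s a + γ * M := by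
  have h1 : ∑ s', P s a s' * (v s' - w s') ≤ M := by
    calc ∑ s', P s a s' * (v s' - w s') ≤ ∑ s', P s a s' * M :=
          Finset.sum_le_sum fun s' _ => mul_le_mul_of_nonneg_left (hM s') ((hP s a).1 s')
      _ = M := by rw [← Finset.sum_mul, (hP s a).2, one_mul]
  have h2 := qOf_sub γ r P v w s a
  nlinarith [mul_le_mul_of_nonneg_left h1 hγ0]

lemma Tpol_sub_le (γ : ℝ) (hγ0 : 0 ≤ γ) (r : S → A → ℝ) (P : S → A → S → ℝ)
    (hP : ∀ s a, (∀ s', 0 ≤ P s a s') ∧ ∑ s', P s a s' = 1)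
    (π : S → A → ℝ) (hπ : ∀ s, (∀ a, 0 ≤ π s a) ∧ ∑ a, π s a = 1)
    (v w : S → ℝ) (M : ℝ) (hM : ∀ s', v s' - w s' ≤ M) (s : S) :
    Tpol γ r P π v s ≤ Tpol γ r P π w s + γ * M := by
  have : ∀ a : A, π s a * qOf γ r P v s a ≤ π s a * (qOf γ r P w s a + γ * M) := fun a =>
    mul_le_mul_of_nonneg_left (qOf_sub_le γ hγ0 r P hP v w M hM s a) ((hπ s).1 a)
  calc Tpol γ r P π v s ≤ ∑ a, π s a * (qOf γ r P w s a + γ * M) :=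
        Finset.sum_le_sum fun a _ => this a
    _ = Tpol γ r P π w s + (∑ a, π s a) * (γ * M) := by
        simp only [Tpol, mul_add, Finset.sum_add_distrib, Finset.sum_mul]
    _ = Tpol γ r P π w s + γ * M := by rw [(hπ s).2, one_mul]

lemma Tpol_mono (γ : ℝ) (hγ0 : 0 ≤ γ) (r : S → A → ℝ) (P : S → A → S → ℝ)
    (hP : ∀ s a, (∀ s', 0 ≤ P s a s') ∧ ∑ s', P s a s' = 1)
    (π : S → A → ℝ) (hπ : ∀ s, (∀ a, 0 ≤ π s a) ∧ ∑ a, π s a = 1)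
    (v w : S → ℝ) (hvw : ∀ s', v s' ≤ w s') (s : S) :
    Tpol γ r P π v s ≤ Tpol γ r P π w s := by
  have := Tpol_sub_le γ hγ0 r P hP π hπ v w 0 (fun s' => by linarith [hvw s']) s
  simpa using this

lemma Topt_sub_le (γ : ℝ) (hγ0 : 0 ≤ γ) (r : S → A → ℝ) (P : S → A → S → ℝ)
    (hP : ∀ s a, (∀ s', 0 ≤ P s a s') ∧ ∑ s', P s a s' = 1)
    (v w : S → ℝ) (M : ℝ) (hM : ∀ s', v s' - w s' ≤ M) (s : S) :
    Topt γ r P v s ≤ Topt γ r P w s + γ * M := by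
  refine ciSup_le fun a => ?_
  calc qOf γ r P v s a ≤ qOf γ r P w s a + γ * M := qOf_sub_le γ hγ0 r P hP v w M hM s a
    _ ≤ Topt γ r P w s + γ * M := by
        have := le_ciSup (qOf_bdd γ r P w s) a
        exact add_le_add_left this _

lemma Tpol_le_Topt (γ : ℝ) (r : S → A → ℝ) (P : S → A → S → ℝ)
    (π : S → A → ℝ) (hπ : ∀ s, (∀ a, 0 ≤ π s a) ∧ ∑ a, π s a = 1)
    (v : S → ℝ) (s : S) : Tpol γ r P π v s ≤ Topt γ r P v s := by
  calc Tpol γ r P π v s ≤ ∑ a, π s a * Topt γ r P v s :=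
        Finset.sum_le_sum fun a _ =>
          mul_le_mul_of_nonneg_left (le_ciSup (qOf_bdd γ r P v s) a) ((hπ s).1 a)
    _ = Topt γ r P v s := by rw [← Finset.sum_mul, (hπ s).2, one_mul]

/-- comparison lemma for `Tpol`. -/
lemma comp_pol [Nonempty S] (γ : ℝ) (hγ0 : 0 ≤ γ) (hγ1 : γ < 1)
    (r : S → A → ℝ) (P : S → A → S → ℝ)
    (hP : ∀ s a, (∀ s', 0 ≤ P s a s') ∧ ∑ s', P s a s' = 1)
    (π : S → A → ℝ) (hπ : ∀ s, (∀ a, 0 ≤ π s a) ∧ ∑ a, π s a = 1)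
    (x y : S → ℝ) (hx : ∀ s, x s ≤ Tpol γ r P π x s) (hy : Tpol γ r P π y = y) :
    x ≤ y := by
  set M : ℝ := Finset.univ.sup' Finset.univ_nonempty (fun s => x s - y s) with hMdef
  have hMle : ∀ s : S, x s - y s ≤ M := fun s => Finset.le_sup' (f := fun s => x s - y s) (Finset.mem_univ s)
  have key : ∀ s, x s - y s ≤ γ * M := by
    intro s
    have h1 := Tpol_sub_le γ hγ0 r P hP π hπ x y M hMle s
    have h2 := hx s
    have h3 : Tpol γ r P π y s = y s := congrFun hy s
    linarith
  obtain ⟨s0, _, hs0⟩ := Finset.exists_mem_eq_sup' Finset.univ_nonempty (fun s => x s - y s)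
  have hM0 : M ≤ 0 := by
    have := key s0
    rw [← hs0] at this
    nlinarith
  intro s
  have := hMle s
  linarith

/-- comparison lemma for `Topt`. -/
lemma comp_opt [Nonempty S] (γ : ℝ) (hγ0 : 0 ≤ γ) (hγ1 : γ < 1)
    (r : S → A → ℝ) (P : S → A → S → ℝ)
    (hP : ∀ s a, (∀ s', 0 ≤ P s a s') ∧ ∑ s', P s a s' = 1)
    (x y : S → ℝ) (hx : ∀ s, x s ≤ Topt γ r P x s) (hy : Topt γ r P y = y) :
    x ≤ y := by
  set M : ℝ := Finset.univ.sup' Finset.univ_nonempty (fun s => x s - y s) with hMdef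
  have hMle : ∀ s : S, x s - y s ≤ M := fun s => Finset.le_sup' (f := fun s => x s - y s) (Finset.mem_univ s)
  have key : ∀ s, x s - y s ≤ γ * M := by
    intro s
    have h1 := Topt_sub_le γ hγ0 r P hP x y M hMle s
    have h2 := hx s
    have h3 : Topt γ r P y s = y s := congrFun hy s
    linarith
  obtain ⟨s0, _, hs0⟩ := Finset.exists_mem_eq_sup' Finset.univ_nonempty (fun s => x s - y s)
  have hM0 : M ≤ 0 := by
    have := key s0
    rw [← hs0] at this
    nlinarith
  intro s
  have := hMle s
  linarith

/-- existence of a fixed point of `Tpol` via Banach. -/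
lemma exists_fixed (γ : ℝ) (hγ0 : 0 ≤ γ) (hγ1 : γ < 1)
    (r : S → A → ℝ) (P : S → A → S → ℝ)
    (hP : ∀ s a, (∀ s', 0 ≤ P s a s') ∧ ∑ s', P s a s' = 1)
    (π : S → A → ℝ) (hπ : ∀ s, (∀ a, 0 ≤ π s a) ∧ ∑ a, π s a = 1) :
    ∃ v : S → ℝ, Tpol γ r P π v = v := by
  haveI : Nonempty (S → ℝ) := ⟨0⟩
  set K : NNReal := ⟨γ, hγ0⟩ with hK
  have hL : LipschitzWith K (Tpol γ r P π) := by
    apply LipschitzWith.of_dist_le_mul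
    intro v w
    have hcoe : (K : ℝ) = γ := rfl
    rw [hcoe]
    have h0 : (0:ℝ) ≤ γ * dist v w := mul_nonneg hγ0 dist_nonneg
    rw [dist_pi_le_iff h0]
    intro s
    rw [Real.dist_eq, abs_sub_le_iff]
    constructor
    · have := Tpol_sub_le γ hγ0 r P hP π hπ v w (dist v w)
        (fun s' => by
          have h1 : v s' - w s' ≤ dist (v s') (w s') := by
            rw [Real.dist_eq]; exact le_abs_self _
          exact h1.trans (dist_le_pi_dist v w s')) s
      linarith
    · have := Tpol_sub_le γ hγ0 r P hP π hπ w v (dist v w)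
        (fun s' => by
          have h1 : w s' - v s' ≤ dist (v s') (w s') := by
            rw [Real.dist_eq, abs_sub_comm]; exact le_abs_self _
          exact h1.trans (dist_le_pi_dist v w s')) s
      linarith
  have hC : ContractingWith K (Tpol γ r P π) := by
    refine ⟨?_, hL⟩
    rw [← NNReal.coe_lt_coe]
    exact hγ1
  exact ⟨ContractingWith.fixedPoint _ hC, hC.fixedPoint_isFixedPt⟩

lemma Tpol_mix (γ c : ℝ) (r : S → A → ℝ) (P : S → A → S → ℝ)
    (π1 π2 : S → A → ℝ) (v : S → ℝ) (s : S) :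
    Tpol γ r P (mixPol c π1 π2) v s = (1 - c) * Tpol γ r P π1 v s + c * Tpol γ r P π2 v s := by
  simp only [Tpol, mixPol, add_mul, Finset.sum_add_distrib, Finset.mul_sum]
  congr 1 <;> exact Finset.sum_congr rfl fun _ _ => by ring

end Aux

/-- For any base policy π₀ and α ∈ [0,1), the α-optimal value
dominates the value of π₀ componentwise: `v^{π₀} ≤ v^{π^α(π_α*,π₀)}`, with
equality everywhere iff π₀ is an optimal policy of the MDP. -/
theorem alpha_optimal_dominates_base
    {S A : Type*} [Fintype S] [Fintype A] [Nonempty A]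
    (γ α : ℝ) (hγ0 : 0 ≤ γ) (hγ1 : γ < 1) (hα0 : 0 ≤ α) (hα1 : α < 1)
    (r : S → A → ℝ) (P : S → A → S → ℝ) (π0 πα : S → A → ℝ)
    (hP : ∀ s a, (∀ s', 0 ≤ P s a s') ∧ ∑ s', P s a s' = 1)
    (hπ0 : ∀ s, (∀ a, 0 ≤ π0 s a) ∧ ∑ a, π0 s a = 1)
    (hπα : ∀ s, (∀ a, 0 ≤ πα s a) ∧ ∑ a, πα s a = 1)
    (v0 vα vstar : S → ℝ)
    (hv0 : Tpol γ r P π0 v0 = v0)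
    (hvα : Tpol γ r P (mixPol α πα π0) vα = vα)
    (hopt : ∀ π' : S → A → ℝ, (∀ s, (∀ a, 0 ≤ π' s a) ∧ ∑ a, π' s a = 1) →
      ∀ v' : S → ℝ, Tpol γ r P (mixPol α π' π0) v' = v' → v' ≤ vα)
    (hstar : Topt γ r P vstar = vstar) :
    v0 ≤ vα ∧ (v0 = vα ↔ v0 = vstar) := by
  classical
  rcases isEmpty_or_nonempty S with hS | hS
  · refine ⟨fun s => isEmptyElim s, ?_, ?_⟩ <;>
      intro _ <;> exact funext fun s => isEmptyElim s
  -- S nonempty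
  have hmix0 : mixPol α π0 π0 = π0 := by
    funext s a; simp only [mixPol]; ring
  have hle : v0 ≤ vα := hopt π0 hπ0 v0 (by rw [hmix0]; exact hv0)
  have hmixst : ∀ (π' : S → A → ℝ), (∀ s, (∀ a, 0 ≤ π' s a) ∧ ∑ a, π' s a = 1) →
      ∀ s, (∀ a, 0 ≤ mixPol α π' π0 s a) ∧ ∑ a, mixPol α π' π0 s a = 1 := by
    intro π' hπ' s
    constructor
    · intro a
      have := (hπ' s).1 a
      have := (hπ0 s).1 a
      have h1 : (0:ℝ) ≤ 1 - α := by linarith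
      simp only [mixPol]
      positivity
    · simp only [mixPol, Finset.sum_add_distrib, ← Finset.mul_sum, (hπ' s).2, (hπ0 s).2]
      ring
  -- vα ≤ vstar
  have hvαstar : vα ≤ vstar := by
    refine comp_opt γ hγ0 hγ1 r P hP vα vstar (fun s => ?_) hstar
    have h1 : Tpol γ r P (mixPol α πα π0) vα s = vα s := congrFun hvα s
    have h2 := Tpol_le_Topt γ r P (mixPol α πα π0) (hmixst πα hπα) vα s
    linarith
  refine ⟨hle, ?_, ?_⟩
  · -- v0 = vα → v0 = vstar
    intro heq
    -- first: Topt v0 = v0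
    have hTv0ge : ∀ s, v0 s ≤ Topt γ r P v0 s := by
      intro s
      have h1 : Tpol γ r P π0 v0 s = v0 s := congrFun hv0 s
      have h2 := Tpol_le_Topt γ r P π0 hπ0 v0 s
      linarith
    have h0opt : Topt γ r P v0 = v0 := by
      by_contra hne
      have : ∃ s0, v0 s0 < Topt γ r P v0 s0 := by
        by_contra hall
        push_neg at hall
        exact hne (funext fun s => le_antisymm (hall s) (hTv0ge s))
      obtain ⟨s0, hs0⟩ := this
      -- greedy policy
      have hgex : ∀ s : S, ∃ a : A, ∀ b : A, qOf γ r P v0 s b ≤ qOf γ r P v0 s a :=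
        fun s => Finite.exists_max _
      choose g hg using hgex
      have hTopt_g : ∀ s, Topt γ r P v0 s = qOf γ r P v0 s (g s) := fun s =>
        le_antisymm (ciSup_le (hg s)) (le_ciSup (qOf_bdd γ r P v0 s) (g s))
      set πg : S → A → ℝ := fun s a => if a = g s then 1 else 0 with hπgdef
      have hπg : ∀ s, (∀ a, 0 ≤ πg s a) ∧ ∑ a, πg s a = 1 := by
        intro s
        constructor
        · intro a; simp only [hπgdef]; split <;> norm_num
        · simp [hπgdef]
      have hTg : ∀ s, Tpol γ r P πg v0 s = Topt γ r P v0 s := by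
        intro s
        rw [hTopt_g s]
        simp only [Tpol, hπgdef, ite_mul, one_mul, zero_mul]
        rw [Finset.sum_ite_eq' Finset.univ (g s) (fun a => qOf γ r P v0 s a)]
        simp
      set μ : S → A → ℝ := mixPol α πg π0 with hμdef
      have hμst := hmixst πg hπg
      have hTμ : ∀ s, Tpol γ r P μ v0 s = (1 - α) * Topt γ r P v0 s + α * v0 s := by
        intro s
        rw [hμdef, Tpol_mix, hTg s, congrFun hv0 s]
      have hv0leTμ : ∀ s, v0 s ≤ Tpol γ r P μ v0 s := by
        intro s
        rw [hTμ s]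
        have := hTv0ge s
        nlinarith
      obtain ⟨vμ, hvμ⟩ := exists_fixed γ hγ0 hγ1 r P hP μ hμst
      have hv0levμ : v0 ≤ vμ := comp_pol γ hγ0 hγ1 r P hP μ hμst v0 vμ hv0leTμ hvμ
      have hmono := Tpol_mono γ hγ0 r P hP μ hμst v0 vμ (fun s => hv0levμ s)
      have hvμle : vμ ≤ vα := hopt πg hπg vμ hvμ
      have hstrict : v0 s0 < vμ s0 := by
        have h1 := hv0leTμ s0
        have h2 : Tpol γ r P μ v0 s0 ≤ Tpol γ r P μ vμ s0 := hmono s0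
        have h3 : Tpol γ r P μ vμ s0 = vμ s0 := congrFun hvμ s0
        have h4 : v0 s0 < Tpol γ r P μ v0 s0 := by
          rw [hTμ s0]; nlinarith [hTv0ge s0]
        linarith
      have := hvμle s0
      rw [← heq] at this
      linarith
    -- uniqueness of optimal fixed point
    have h1 : v0 ≤ vstar :=
      comp_opt γ hγ0 hγ1 r P hP v0 vstar (fun s => (congrFun h0opt s).ge) hstar
    have h2 : vstar ≤ v0 :=
      comp_opt γ hγ0 hγ1 r P hP vstar v0 (fun s => (congrFun hstar s).ge) h0opt
    exact le_antisymm h1 h2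
  · -- v0 = vstar → v0 = vα
    intro heq
    refine le_antisymm hle fun s => ?_
    have := hvαstar s
    rw [← heq] at this
    exact this
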